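/- Let X be a finite pure simplicial complex of dimension at least 2, let G be a group acting on a finite nonempty set S with Fix_G(S)<|S|, assume C¹(X;G)∖Z¹(X;G) is nonempty and h₁(X;G)>0. Then for every φ ∈ C¹(X;G) there exists ψ ∈ Z¹(X;G) such that dist(φ,ψ) ≤ m_f(Y_φ) / ((1 − Fix_G(S)/|S|)·h₁(X;G)), where f:Y_φ→X is the projection map. -/

import Mathlib

open Finset

variable {V : Type*} [DecidableEq V]

/-- A finite abstract simplicial complex on vertex type `V`. -/
structure SComplex (V : Type*) [DecidableEq V] where
  faces : Finset (Finset V)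
  nonempty_of_mem : ∀ σ ∈ faces, σ.Nonempty
  down_closed : ∀ σ ∈ faces, ∀ τ ⊆ σ, τ.Nonempty → τ ∈ faces

namespace SComplex

/-- The set `X(k)` of `k`-dimensional simplices (cardinality `k+1`). -/
def simps (X : SComplex V) (k : ℕ) : Finset (Finset V) :=
  X.faces.filter fun σ => σ.card = k + 1

/-- The number of vertices of a top-dimensional face. -/
def rank (X : SComplex V) : ℕ := X.faces.sup Finset.card

/-- The weight `c_X(σ)`. -/
noncomputable def weight (X : SComplex V) (σ : Finset V) : ℝ :=
  (((X.simps (X.rank - 1)).filter fun τ => σ ⊆ τ).card : ℝ) /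
    ((X.rank.choose σ.card) * ((X.simps (X.rank - 1)).card))

/-- `X` is pure of dimension `n-1` : every face is contained in a face with `n` vertices. -/
def IsPureOfRank (X : SComplex V) (n : ℕ) : Prop :=
  X.faces.Nonempty ∧ ∀ σ ∈ X.faces, ∃ τ ∈ X.faces, σ ⊆ τ ∧ τ.card = n

/-- The link `lk(X,σ)`. -/
def lk (X : SComplex V) (σ : Finset V) : SComplex V where
  faces := X.faces.filter fun η => η ∪ σ ∈ X.faces ∧ Disjoint η σ
  nonempty_of_mem := fun η hη => X.nonempty_of_mem η (mem_filter.mp hη).1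
  down_closed := by
    intro η hη τ hτη hτ
    rw [mem_filter] at hη ⊢
    refine ⟨X.down_closed η hη.1 τ hτη hτ,
      X.down_closed (η ∪ σ) hη.2.1 (τ ∪ σ) (union_subset_union_left hτη) ?_,
      hη.2.2.mono_left hτη⟩
    exact hτ.mono subset_union_left

/-- The star `st(X,σ)`. -/
def star (X : SComplex V) (σ : Finset V) : Finset (Finset V) :=
  X.faces.filter fun τ => τ ∪ σ ∈ X.faces

/-- The vertices of `X`. -/
def verts (X : SComplex V) [Fintype V] : Finset V :=
  Finset.univ.filter fun v => ({v} : Finset V) ∈ X.faces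

end SComplex
section Cochains

variable {G : Type*} [Group G]

/-- `φ ∈ C¹(X;G)`: an antisymmetric `G`-valued function on ordered pairs. -/
def IsCochain (G : Type*) [Group G] (φ : V → V → G) : Prop :=
  ∀ u v : V, φ u v = (φ v u)⁻¹

/-- The coboundary `d₁φ(u,v,w) = φ(u,v)φ(v,w)φ(w,u)`. -/
def d1 (φ : V → V → G) (u v w : V) : G := φ u v * φ v w * φ w u

/-- `φ ∈ Z¹(X;G)`: a cochain all of whose triangle equations hold. -/
def IsCocycle (X : SComplex V) (φ : V → V → G) : Prop :=
  IsCochain G φ ∧ ∀ u v w : V, ({u, v, w} : Finset V) ∈ X.simps 2 → d1 φ u v w = 1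

open Classical in
/-- The norm `‖φ‖`: total weight of the support of `φ`. -/
noncomputable def norm1 (X : SComplex V) (φ : V → V → G) : ℝ :=
  ∑ e ∈ (X.simps 1).filter (fun e => ∃ u v : V, e = {u, v} ∧ φ u v ≠ 1), X.weight e

open Classical in
/-- The norm `‖d₁φ‖`: total weight of the 2-simplices whose equation is violated. -/
noncomputable def normD1 (X : SComplex V) (φ : V → V → G) : ℝ :=
  ∑ τ ∈ (X.simps 2).filter (fun τ => ∃ u v w : V, τ = {u, v, w} ∧ d1 φ u v w ≠ 1), X.weight τ

/-- `dist(φ,ψ) = ‖φψ⁻¹‖`. -/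
noncomputable def dist1 (X : SComplex V) (φ ψ : V → V → G) : ℝ :=
  norm1 X (fun u v => φ u v * (ψ u v)⁻¹)

/-- The cosystolic norm `‖φ‖_csy`: the distance from `φ` to `Z¹(X;G)`. -/
noncomputable def csyNorm (X : SComplex V) (φ : V → V → G) : ℝ :=
  sInf {d : ℝ | ∃ ψ : V → V → G, IsCocycle X ψ ∧ d = dist1 X φ ψ}

/-- The cosystolic expansion `h₁(X;G)`. -/
noncomputable def h1 (X : SComplex V) (G : Type*) [Group G] : ℝ :=
  sInf {r : ℝ | ∃ φ : V → V → G, IsCochain G φ ∧ ¬ IsCocycle X φ ∧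
    r = normD1 X φ / csyNorm X φ}

end Cochains

section Fix

variable (G : Type*) [Group G] (S : Type*) [Fintype S] [MulAction G S]

open Classical in
/-- `fix(g) = |{s ∈ S : g•s = s}|`. -/
noncomputable def fixCard (g : G) : ℕ :=
  (Finset.univ.filter fun s : S => g • s = s).card

/-- `Fix_G(S) = max_{g ≠ 1} fix(g)`. -/
noncomputable def FixG : ℕ :=
  sSup {k : ℕ | ∃ g : G, g ≠ 1 ∧ fixCard G S g = k}

end Fix
section Ycomplex

variable {G : Type*} [Group G] {S : Type*} [Fintype S] [DecidableEq S] [MulAction G S]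
variable [Fintype V]

open Classical in
/-- The complex `Y_φ` associated to a cochain `φ`, together with the projection
`Prod.fst : Y_φ → X`. -/
noncomputable def Ycomplex (X : SComplex V) (φ : V → V → G) (S : Type*)
    [Fintype S] [DecidableEq S] [MulAction G S] : SComplex (V × S) where
  faces := Finset.univ.filter fun σ : Finset (V × S) =>
    σ.image Prod.fst ∈ X.faces ∧ (σ.image Prod.fst).card = σ.card ∧
    ∀ p ∈ σ, ∀ q ∈ σ, p.1 ≠ q.1 → p.2 = φ p.1 q.1 • q.2
  nonempty_of_mem := by
    intro σ hσ
    rw [Finset.mem_filter] at hσ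
    exact Finset.image_nonempty.mp (X.nonempty_of_mem _ hσ.2.1)
  down_closed := by
    intro σ hσ τ hτσ hτ
    rw [Finset.mem_filter] at hσ ⊢
    obtain ⟨-, h1, h2, h3⟩ := hσ
    refine ⟨Finset.mem_univ _,
      X.down_closed _ h1 _ (Finset.image_subset_image hτσ) (Finset.image_nonempty.mpr hτ),
      ?_, fun p hp q hq => h3 p (hτσ hp) q (hτσ hq)⟩
    exact Finset.card_image_iff.mpr ((Finset.card_image_iff.mp h2).mono hτσ)

end Ycomplex

section Deficiency

variable {W : Type*} [DecidableEq W] [Fintype W] [Fintype V]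

open Classical in
/-- `D_f(ut)`: the edges in the link of `f(ut)` that are not covered by the image of the
link of `ut`. -/
noncomputable def Dset (Y : SComplex W) (X : SComplex V) (f : W → V) (ut : W) :
    Finset (Finset V) :=
  ((X.lk {f ut}).simps 1).filter fun e => ¬ ∃ η ∈ (Y.lk {ut}).faces, η.image f = e

/-- The local deficiency `μ_f(ut)`. -/
noncomputable def locDef (Y : SComplex W) (X : SComplex V) (f : W → V) (ut : W) : ℝ :=
  ∑ e ∈ Dset Y X f ut, (X.lk {f ut}).weight e

open Classical in
/-- The deficiency `m_f(Y)` of a map `f : Y → X`. -/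
noncomputable def deficiency (Y : SComplex W) (X : SComplex V) (f : W → V) : ℝ :=
  ∑ u ∈ X.verts, (X.weight {u} / ((Y.verts.filter fun w => f w = u).card : ℝ)) *
    ∑ ut ∈ Y.verts.filter (fun w => f w = u), locDef Y X f ut

end Deficiency
section MapOver

variable [Fintype V]

/-- An element of `M(X;G,S)`: a surjective simplicial `|S|`-to-`1` map onto `X` whose
vertex fibers are identified with `S` and whose edge fibers are matchings given by the
action of elements of `G`. -/
structure MapOver (X : SComplex V) (G : Type*) (S : Type*) [Group G] [Fintype S]
    [DecidableEq S] [MulAction G S] [Fintype V] where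
  Y : SComplex (V × S)
  simplicial : ∀ τ ∈ Y.faces, τ.image Prod.fst ∈ X.faces
  injOnFaces : ∀ τ ∈ Y.faces, (τ.image Prod.fst).card = τ.card
  surj : ∀ σ ∈ X.faces, ∃ τ ∈ Y.faces, τ.image Prod.fst = σ
  fiber : ∀ p : V × S, ({p} : Finset (V × S)) ∈ Y.faces ↔ ({p.1} : Finset V) ∈ X.faces
  edges : ∀ u v : V, ({u, v} : Finset V) ∈ X.simps 1 → ∃ g : G,
    ∀ s t : S, (({(u, s), (v, t)} : Finset (V × S)) ∈ Y.faces ↔ s = g • t)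

variable {G : Type*} [Group G] {S : Type*} [Fintype S] [DecidableEq S] [MulAction G S]

open Classical in
/-- The set of edges of `Y` lying over a given edge of the base. -/
noncomputable def edgeFiber (Y : SComplex (V × S)) (e : Finset V) :
    Finset (Finset (V × S)) :=
  (Y.simps 1).filter fun e' => e'.image Prod.fst = e

open Classical in
/-- The distance between two elements of `M(X;G,S)`: the weight of the set of edges of
`X` over which the two edge fibers differ. -/
noncomputable def mdist (X : SComplex V) (M₁ M₂ : MapOver X G S) : ℝ :=
  ∑ e ∈ (X.simps 1).filter (fun e => edgeFiber M₁.Y e ≠ edgeFiber M₂.Y e), X.weight e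

/-- The distance from an element of `M(X;G,S)` to the set `M₀(X;G,S)` of genuine covers. -/
noncomputable def distToCovers (X : SComplex V) (M : MapOver X G S) : ℝ :=
  sInf {d : ℝ | ∃ M' : MapOver X G S, deficiency M'.Y X Prod.fst = 0 ∧ d = mdist X M M'}

/-- The `(G,S)`-cover-stability `c(X;G,S)`. -/
noncomputable def coverStability (X : SComplex V) (G : Type*) (S : Type*) [Group G]
    [Fintype S] [DecidableEq S] [MulAction G S] : ℝ :=
  sInf {r : ℝ | ∃ M : MapOver X G S, deficiency M.Y X Prod.fst ≠ 0 ∧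
    r = deficiency M.Y X Prod.fst / distToCovers X M}

end MapOver
section Paths

/-- A (possibly closed) edge path in a complex: consecutive vertices span edges. -/
def IsEdgePath (K : SComplex V) (p : List V) : Prop :=
  (∀ v ∈ p, ({v} : Finset V) ∈ K.faces) ∧
    p.Chain' fun u v => ({u, v} : Finset V) ∈ K.faces

/-- Combinatorial homotopy of edge paths, generated by erasing repetitions and by
collapsing across simplices. -/
inductive Homotopic (K : SComplex V) : List V → List V → Prop
  | refl (p : List V) : Homotopic K p p
  | symm {p q : List V} : Homotopic K p q → Homotopic K q p
  | trans {p q r : List V} : Homotopic K p q → Homotopic K q r → Homotopic K p r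
  | collapse (p q : List V) (a b c : V) (h : ({a, b, c} : Finset V) ∈ K.faces) :
      Homotopic K (p ++ a :: b :: c :: q) (p ++ a :: c :: q)
  | dedup (p q : List V) (a : V) : Homotopic K (p ++ a :: a :: q) (p ++ a :: q)

/-- `K` is connected: any two vertices are joined by an edge path. -/
def SComplexConnected (K : SComplex V) : Prop :=
  ∀ u v : V, ({u} : Finset V) ∈ K.faces → ({v} : Finset V) ∈ K.faces →
    ∃ p : List V, IsEdgePath K p ∧ p.head? = some u ∧ p.getLast? = some v

/-- `K` is simply connected: connected, and every closed edge path is null-homotopic. -/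
def SimplyConnected (K : SComplex V) : Prop :=
  SComplexConnected K ∧
    ∀ (p : List V) (a : V), IsEdgePath K p → p.head? = some a → p.getLast? = some a →
      Homotopic K p [a]

end Paths

section OrderComplex

open Classical in
/-- The order complex of `L ∖ {⊥, ⊤}`: simplices are the nonempty chains avoiding
`⊥` and `⊤`. -/
noncomputable def orderComplex (L : Type*) [Lattice L] [BoundedOrder L] [Fintype L]
    [DecidableEq L] : SComplex L where
  faces := Finset.univ.filter fun σ : Finset L =>
    σ.Nonempty ∧ (∀ x ∈ σ, x ≠ ⊥ ∧ x ≠ ⊤) ∧ ∀ x ∈ σ, ∀ y ∈ σ, x ≤ y ∨ y ≤ x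
  nonempty_of_mem := fun σ hσ => (Finset.mem_filter.mp hσ).2.1
  down_closed := by
    intro σ hσ τ hτσ hτ
    rw [Finset.mem_filter] at hσ ⊢
    exact ⟨Finset.mem_univ _, hτ, fun x hx => hσ.2.2.1 x (hτσ hx),
      fun x hx y hy => hσ.2.2.2 x (hτσ hx) y (hτσ hy)⟩

end OrderComplex
section Building

variable (F : Type*) [Field F] [Fintype F]

noncomputable instance : Fintype (Submodule F (Fin 4 → F)) := by
  have : Finite (Submodule F (Fin 4 → F)) :=
    Finite.of_injective (fun N => (N : Set (Fin 4 → F))) SetLike.coe_injective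
  exact Fintype.ofFinite _

noncomputable instance : DecidableEq (Submodule F (Fin 4 → F)) := Classical.decEq _

/-- The spherical building `A₃(F_q)`: the order complex of the poset of nontrivial proper
linear subspaces of `F_q⁴`. -/
noncomputable def A3 : SComplex (Submodule F (Fin 4 → F)) :=
  orderComplex (Submodule F (Fin 4 → F))

end Building
section FixEdge

variable {G : Type*} [Group G]

open Classical in
/-- The value `fix(d₁φ(u,v₁,v₂))` for an unordered edge `e = {v₁,v₂}` of the link of `u`
(well defined for cochains, since `fix` is invariant under inversion and conjugation). -/
noncomputable def fixEdge (S : Type*) [Fintype S] [MulAction G S] (φ : V → V → G)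
    (u : V) (e : Finset V) : ℕ :=
  sSup {k : ℕ | ∃ v₁ ∈ e, ∃ v₂ ∈ e, v₁ ≠ v₂ ∧ k = fixCard G S (d1 φ u v₁ v₂)}

end FixEdge
section AuxProof

variable {V : Type*} [DecidableEq V]

lemma SComplex.weight_nonneg (X : SComplex V) (σ : Finset V) : 0 ≤ X.weight σ :=
  div_nonneg (by positivity) (by positivity)

lemma norm1_nonneg {G : Type*} [Group G] (X : SComplex V) (φ : V → V → G) :
    0 ≤ norm1 X φ :=
  Finset.sum_nonneg fun e _ => X.weight_nonneg e

lemma normD1_nonneg {G : Type*} [Group G] (X : SComplex V) (φ : V → V → G) :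
    0 ≤ normD1 X φ :=
  Finset.sum_nonneg fun e _ => X.weight_nonneg e

lemma dist1_nonneg {G : Type*} [Group G] (X : SComplex V) (φ ψ : V → V → G) :
    0 ≤ dist1 X φ ψ := norm1_nonneg _ _

lemma dist1_self {G : Type*} [Group G] (X : SComplex V) (φ : V → V → G) :
    dist1 X φ φ = 0 := by
  classical
  unfold dist1 norm1
  rw [Finset.sum_eq_zero_iff_of_nonneg (fun e _ => X.weight_nonneg e) |>.mpr]
  intro e he
  rw [Finset.mem_filter] at he
  obtain ⟨-, u, v, -, h⟩ := he
  exact absurd (mul_inv_cancel _) h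

lemma isCocycle_one {G : Type*} [Group G] (X : SComplex V) :
    IsCocycle X (fun _ _ => (1 : G)) :=
  ⟨fun _ _ => (inv_one).symm, fun _ _ _ _ => by simp [d1]⟩

lemma SComplex.rank_eq {X : SComplex V} {n : ℕ} (h : X.IsPureOfRank n) : X.rank = n := by
  obtain ⟨⟨σ0, hσ0⟩, hp⟩ := h
  refine le_antisymm (Finset.sup_le fun σ hσ => ?_) ?_
  · obtain ⟨τ, hτ, hsub, hcard⟩ := hp σ hσ
    exact hcard ▸ Finset.card_le_card hsub
  · obtain ⟨τ, hτ, _, hcard⟩ := hp σ0 hσ0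
    exact hcard ▸ Finset.le_sup hτ

lemma SComplex.mem_lk_faces {X : SComplex V} {u : V} {η : Finset V} :
    η ∈ (X.lk {u}).faces ↔ η ∈ X.faces ∧ η ∪ {u} ∈ X.faces ∧ u ∉ η := by
  simp [SComplex.lk, Finset.disjoint_singleton_right]

lemma SComplex.mem_simps {X : SComplex V} {k : ℕ} {σ : Finset V} :
    σ ∈ X.simps k ↔ σ ∈ X.faces ∧ σ.card = k + 1 := Finset.mem_filter

lemma SComplex.erase_mem_lk {X : SComplex V} {n : ℕ} (hn : 2 ≤ n)
    {u : V} {τ' : Finset V} (hτ' : τ' ∈ X.faces) (huτ : u ∈ τ') (hcard : τ'.card = n) :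
    τ'.erase u ∈ (X.lk {u}).faces := by
  have hce : (τ'.erase u).card = n - 1 := by rw [Finset.card_erase_of_mem huτ, hcard]
  have hne : (τ'.erase u).Nonempty := by
    rw [← Finset.card_pos, hce]; omega
  refine SComplex.mem_lk_faces.mpr ⟨X.down_closed τ' hτ' _ (Finset.erase_subset _ _) hne,
    ?_, Finset.notMem_erase _ _⟩
  rw [Finset.union_comm, ← Finset.insert_eq, Finset.insert_erase huτ]
  exact hτ'

lemma SComplex.lk_pure {X : SComplex V} {n : ℕ} (hn : 2 ≤ n) (h : X.IsPureOfRank n)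
    {u : V} (hu : ({u} : Finset V) ∈ X.faces) :
    (X.lk {u}).IsPureOfRank (n - 1) := by
  constructor
  · obtain ⟨τ', hτ', hsub, hcard⟩ := h.2 {u} hu
    exact ⟨τ'.erase u, X.erase_mem_lk hn hτ' (hsub (Finset.mem_singleton_self u)) hcard⟩
  · intro η hη
    rw [SComplex.mem_lk_faces] at hη
    obtain ⟨hηf, hηu, hηnu⟩ := hη
    obtain ⟨τ', hτ', hsub, hcard⟩ := h.2 _ hηu
    have huτ : u ∈ τ' := hsub (by simp)
    refine ⟨τ'.erase u, X.erase_mem_lk hn hτ' huτ hcard, ?_, by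
      rw [Finset.card_erase_of_mem huτ, hcard]⟩
    intro x hx
    exact Finset.mem_erase.mpr ⟨fun hxu => hηnu (hxu ▸ hx), hsub (Finset.mem_union_left _ hx)⟩

lemma SComplex.lk_top_count {X : SComplex V} {n : ℕ} (hn : 3 ≤ n) (h : X.IsPureOfRank n)
    {u : V} (σ : Finset V) (huσ : u ∉ σ) :
    (((X.lk {u}).simps (n - 2)).filter fun η => σ ⊆ η).card
      = ((X.simps (n - 1)).filter fun τ => insert u σ ⊆ τ).card := by
  classical
  refine Finset.card_bij (fun η _ => insert u η) ?_ ?_ ?_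
  · intro η hη
    rw [Finset.mem_filter, SComplex.mem_simps, SComplex.mem_lk_faces] at hη
    obtain ⟨⟨⟨hηf, hηu, hηnu⟩, hcard⟩, hσ⟩ := hη
    rw [Finset.mem_filter, SComplex.mem_simps]
    refine ⟨⟨by rwa [Finset.union_comm, ← Finset.insert_eq] at hηu, ?_⟩,
      Finset.insert_subset_insert u hσ⟩
    rw [Finset.card_insert_of_notMem hηnu, hcard]; omega
  · intro η₁ hη₁ η₂ hη₂ heq
    rw [Finset.mem_filter, SComplex.mem_simps, SComplex.mem_lk_faces] at hη₁ hη₂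
    have := congrArg (Finset.erase · u) heq
    simpa [Finset.erase_insert hη₁.1.1.2.2, Finset.erase_insert hη₂.1.1.2.2] using this
  · intro τ hτ
    rw [Finset.mem_filter, SComplex.mem_simps] at hτ
    obtain ⟨⟨hτf, hcard⟩, hsub⟩ := hτ
    have huτ : u ∈ τ := hsub (Finset.mem_insert_self u σ)
    have hcn : τ.card = n := by omega
    refine ⟨τ.erase u, ?_, Finset.insert_erase huτ⟩
    rw [Finset.mem_filter, SComplex.mem_simps]
    refine ⟨⟨X.erase_mem_lk (by omega) hτf huτ hcn, by
      rw [Finset.card_erase_of_mem huτ, hcn]; omega⟩, ?_⟩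
    intro x hx
    exact Finset.mem_erase.mpr ⟨fun hxu => huσ (hxu ▸ hx),
      hsub (Finset.mem_insert_of_mem hx)⟩

lemma weight_lk_identity {X : SComplex V} {n : ℕ} (hn : 3 ≤ n) (h : X.IsPureOfRank n)
    {τ : Finset V} (hτ : τ ∈ X.simps 2) {u : V} (hu : u ∈ τ) :
    X.weight {u} * (X.lk {u}).weight (τ.erase u) = X.weight τ / 3 := by
  classical
  rw [SComplex.mem_simps] at hτ
  obtain ⟨hτf, hτc⟩ := hτ
  have hu1 : ({u} : Finset V) ∈ X.faces :=
    X.down_closed τ hτf {u} (Finset.singleton_subset_iff.mpr hu) (Finset.singleton_nonempty u)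
  have hXr : X.rank = n := SComplex.rank_eq h
  have hLr : (X.lk {u}).rank = n - 1 := SComplex.rank_eq (X.lk_pure (by omega) h hu1)
  have hec : (τ.erase u).card = 2 := by rw [Finset.card_erase_of_mem hu, hτc]
  -- counts
  have hA : ((X.lk {u}).simps (n - 2)).card
      = ((X.simps (n - 1)).filter fun τ' => ({u} : Finset V) ⊆ τ').card := by
    have := X.lk_top_count hn h (∅ : Finset V) (Finset.notMem_empty u)
    simpa [Finset.filter_true_of_mem (fun x _ => Finset.empty_subset x)] using this
  have hB : (((X.lk {u}).simps (n - 2)).filter fun η => τ.erase u ⊆ η).card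
      = ((X.simps (n - 1)).filter fun τ' => τ ⊆ τ').card := by
    have := X.lk_top_count hn h (τ.erase u) (Finset.notMem_erase u τ)
    rwa [Finset.insert_erase hu] at this
  -- positivity
  have hfpos : 0 < (X.simps (n - 1)).card := by
    obtain ⟨σ0, hσ0⟩ := h.1
    obtain ⟨τ', hτ', -, hc⟩ := h.2 σ0 hσ0
    exact Finset.card_pos.mpr ⟨τ', SComplex.mem_simps.mpr ⟨hτ', by omega⟩⟩
  have hapos : 0 < ((X.simps (n - 1)).filter fun τ' => ({u} : Finset V) ⊆ τ').card := by
    obtain ⟨τ', hτ', hsub, hc⟩ := h.2 {u} hu1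
    exact Finset.card_pos.mpr ⟨τ', Finset.mem_filter.mpr
      ⟨SComplex.mem_simps.mpr ⟨hτ', by omega⟩, hsub⟩⟩
  have h21 : n - 1 - 1 = n - 2 := by omega
  unfold SComplex.weight
  rw [hXr, hLr, h21, hA, hB, hec, Finset.card_singleton, hτc]
  have key : (n : ℝ) * ((n - 1).choose 2) = ((n).choose 3) * 3 := by
    have := Nat.add_one_mul_choose_eq (n - 1) 2
    have h1 : n - 1 + 1 = n := by omega
    rw [h1] at this
    exact_mod_cast this
  have hC2 : 0 < ((n - 1).choose 2) := Nat.choose_pos (by omega)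
  have hC3 : 0 < ((n).choose 3) := Nat.choose_pos (by omega)
  have hnn : (0:ℝ) < n := by positivity
  rw [Nat.choose_one_right]
  set a : ℝ := (((X.simps (n - 1)).filter fun τ' => ({u} : Finset V) ⊆ τ').card : ℝ)
  set D : ℝ := (((X.simps (n - 1)).filter fun τ' => τ ⊆ τ').card : ℝ)
  set f : ℝ := ((X.simps (n - 1)).card : ℝ)
  have ha : a ≠ 0 := by positivity
  have hf : f ≠ 0 := by positivity
  have hc2 : ((n - 1).choose 2 : ℝ) ≠ 0 := by positivity
  have hc3 : ((n).choose 3 : ℝ) ≠ 0 := by positivity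
  have goal : a / (↑n * f) * (D / (↑((n - 1).choose 2) * a)) = D / (↑n * ↑((n - 1).choose 2) * f) := by
    field_simp
  rw [goal, key]
  rw [div_div]
  ring_nf

lemma card3_ne {u v w : V} (h : ({u, v, w} : Finset V).card = 3) :
    u ≠ v ∧ u ≠ w ∧ v ≠ w := by
  refine ⟨fun e => ?_, fun e => ?_, fun e => ?_⟩ <;> subst e
  · rw [Finset.insert_idem] at h
    have := Finset.card_insert_le u {w}
    simp at this; omega
  · rw [Finset.insert_comm, Finset.insert_eq_self.mpr (Finset.mem_singleton_self u)] at h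
    have := Finset.card_insert_le v {u}
    simp at this; omega
  · rw [Finset.insert_eq_self.mpr (Finset.mem_singleton_self v)] at h
    have := Finset.card_insert_le u {v}
    simp at this; omega

section Yaux

variable [Fintype V] {G : Type*} [Group G] {S : Type*} [Fintype S] [DecidableEq S]
  [MulAction G S]

lemma mem_Ycomplex_faces {X : SComplex V} {φ : V → V → G} {σ : Finset (V × S)} :
    σ ∈ (Ycomplex X φ S).faces ↔ σ.image Prod.fst ∈ X.faces ∧
      (σ.image Prod.fst).card = σ.card ∧
      ∀ p ∈ σ, ∀ q ∈ σ, p.1 ≠ q.1 → p.2 = φ p.1 q.1 • q.2 := by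
  simp [Ycomplex]

lemma triangle_mem_Ycomplex {X : SComplex V} {φ : V → V → G} (hφ : IsCochain G φ)
    {u v w : V} (hf : ({u, v, w} : Finset V) ∈ X.faces)
    (huv : u ≠ v) (huw : u ≠ w) (hvw : v ≠ w) {s : S}
    (hfix : d1 φ u v w • s = s) :
    ({(u, s), (v, φ v u • s), (w, φ w u • s)} : Finset (V × S)) ∈
      (Ycomplex X φ S).faces := by
  have hkey : φ v w • φ w u • s = φ v u • s := by
    rw [smul_smul, hφ v u, eq_inv_smul_iff, smul_smul, ← mul_assoc]
    exact hfix
  rw [mem_Ycomplex_faces]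
  have himg : ({(u, s), (v, φ v u • s), (w, φ w u • s)} : Finset (V × S)).image Prod.fst
      = {u, v, w} := by
    simp [Finset.image_insert]
  refine ⟨himg ▸ hf, ?_, ?_⟩
  · rw [himg]
    rw [Finset.card_insert_of_notMem (by simp [huv, huw]),
      Finset.card_insert_of_notMem (by simp [hvw]),
      Finset.card_insert_of_notMem (by simp [Prod.ext_iff, huv, huw]),
      Finset.card_insert_of_notMem (by simp [Prod.ext_iff, hvw])]
    simp
  · intro p hp q hq hpq
    simp only [Finset.mem_insert, Finset.mem_singleton] at hp hq
    rcases hp with rfl | rfl | rfl <;> rcases hq with rfl | rfl | rfl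
    all_goals first
      | exact absurd rfl hpq
      | rfl
      | exact hkey.symm
      | (show s = φ u v • φ v u • s; rw [hφ v u, smul_inv_smul])
      | (show s = φ u w • φ w u • s; rw [hφ w u, smul_inv_smul])
      | (show φ w u • s = φ w v • φ v u • s; rw [← hkey, hφ w v, inv_smul_smul])

lemma mem_Dset_iff {X : SComplex V} {φ : V → V → G} (hφ : IsCochain G φ)
    {u v w : V} (hτ : ({u, v, w} : Finset V) ∈ X.simps 2) (s : S) :
    ({v, w} : Finset V) ∈ Dset (Ycomplex X φ S) X Prod.fst (u, s) ↔
      ¬ (d1 φ u v w • s = s) := by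
  classical
  rw [SComplex.mem_simps] at hτ
  obtain ⟨hτf, hτc⟩ := hτ
  obtain ⟨huv, huw, hvw⟩ := card3_ne hτc
  have hvwf : ({v, w} : Finset V) ∈ X.faces := by
    refine X.down_closed _ hτf _ ?_ ⟨v, by simp⟩
    intro x hx; simp only [Finset.mem_insert, Finset.mem_singleton] at hx ⊢; tauto
  have hunion : ({v, w} : Finset V) ∪ {u} = {u, v, w} := by
    ext x; simp only [Finset.mem_union, Finset.mem_insert, Finset.mem_singleton]; tauto
  have hsimps : ({v, w} : Finset V) ∈ (X.lk {u}).simps 1 := by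
    rw [SComplex.mem_simps, SComplex.mem_lk_faces]
    refine ⟨⟨hvwf, hunion ▸ hτf, by simp [huv, huw, Ne.symm]⟩, ?_⟩
    rw [Finset.card_insert_of_notMem (by simp [hvw]), Finset.card_singleton]
  have hexists : (∃ η ∈ ((Ycomplex X φ S).lk {(u, s)}).faces,
      η.image Prod.fst = ({v, w} : Finset V)) ↔ d1 φ u v w • s = s := by
    constructor
    · rintro ⟨η, hη, himg⟩
      rw [SComplex.mem_lk_faces] at hη
      obtain ⟨hηY, hσY, hηns⟩ := hη
      rw [mem_Ycomplex_faces] at hσY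
      obtain ⟨-, -, C⟩ := hσY
      have husσ : (u, s) ∈ η ∪ {(u, s)} := Finset.mem_union_right _ (by simp)
      obtain ⟨p, hpη, hp1⟩ : ∃ p ∈ η, p.1 = v := by
        have : v ∈ η.image Prod.fst := by rw [himg]; simp
        simpa using this
      obtain ⟨q, hqη, hq1⟩ : ∃ q ∈ η, q.1 = w := by
        have : w ∈ η.image Prod.fst := by rw [himg]; simp
        simpa using this
      have hpσ : p ∈ η ∪ {(u, s)} := Finset.mem_union_left _ hpη
      have hqσ : q ∈ η ∪ {(u, s)} := Finset.mem_union_left _ hqη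
      have h1 : s = φ u v • p.2 := by
        have := C (u, s) husσ p hpσ (by rw [hp1]; exact huv)
        rwa [hp1] at this
      have h2 : p.2 = φ v w • q.2 := by
        have := C p hpσ q hqσ (by rw [hp1, hq1]; exact hvw)
        rwa [hp1, hq1] at this
      have h3 : q.2 = φ w u • s := by
        have := C q hqσ (u, s) husσ (by rw [hq1]; exact huw.symm)
        rwa [hq1] at this
      show (φ u v * φ v w * φ w u) • s = s
      rw [mul_smul, mul_smul, ← h3, ← h2, ← h1]
    · intro hfix
      have hσ := triangle_mem_Ycomplex hφ hτf huv huw hvw hfix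
      refine ⟨{(v, φ v u • s), (w, φ w u • s)}, ?_, by simp⟩
      rw [SComplex.mem_lk_faces]
      have hsub : ({(v, φ v u • s), (w, φ w u • s)} : Finset (V × S)) ⊆
          {(u, s), (v, φ v u • s), (w, φ w u • s)} := by
        intro x hx
        simp only [Finset.mem_insert, Finset.mem_singleton] at hx ⊢; tauto
      refine ⟨(Ycomplex X φ S).down_closed _ hσ _ hsub ⟨(v, φ v u • s), by simp⟩, ?_, ?_⟩
      · have : ({(v, φ v u • s), (w, φ w u • s)} : Finset (V × S)) ∪ {(u, s)}
            = {(u, s), (v, φ v u • s), (w, φ w u • s)} := by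
          ext x
          simp only [Finset.mem_union, Finset.mem_insert, Finset.mem_singleton]; tauto
        rw [this]; exact hσ
      · simp [Prod.ext_iff, huv, huw]
  unfold Dset
  rw [Finset.mem_filter]
  simp only [hsimps, true_and]
  exact not_congr hexists

end Yaux

section PermFix

variable {G : Type*} [Group G]

lemma conj_ne_one {G : Type*} [Group G] {g : G} (x : G) (hg : g ≠ 1) :
    x⁻¹ * g * x ≠ 1 := by
  intro h
  apply hg
  calc g = x * (x⁻¹ * g * x) * x⁻¹ := by group
  _ = x * 1 * x⁻¹ := by rw [h]
  _ = 1 := by group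

lemma d1_cyclic (φ : V → V → G) (u v w : V) :
    d1 φ v w u = (φ u v)⁻¹ * d1 φ u v w * (φ u v) := by
  unfold d1; group

lemma d1_swap {φ : V → V → G} (hφ : IsCochain G φ) (u v w : V) :
    d1 φ u w v = (d1 φ u v w)⁻¹ := by
  unfold d1; rw [hφ u w, hφ w v, hφ v u]; group

lemma d1_ne_of_mem {φ : V → V → G} (hφ : IsCochain G φ) {τ : Finset V}
    (hτc : τ.card = 3) {a b c : V} (hτe : τ = {a, b, c})
    (hd : d1 φ a b c ≠ 1) {u : V} (hu : u ∈ τ) :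
    ∃ v w : V, τ.erase u = {v, w} ∧ d1 φ u v w ≠ 1 := by
  subst hτe
  obtain ⟨hab, hac, hbc⟩ := card3_ne hτc
  have hbca : d1 φ b c a ≠ 1 := by
    rw [d1_cyclic φ a b c]
    exact conj_ne_one _ hd
  have hcab : d1 φ c a b ≠ 1 := by
    rw [d1_cyclic φ b c a]
    exact conj_ne_one _ hbca
  rw [Finset.mem_insert, Finset.mem_insert, Finset.mem_singleton] at hu
  rcases hu with rfl | rfl | rfl
  · refine ⟨b, c, ?_, hd⟩
    rw [Finset.erase_insert (by simp [hab, hac])]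
  · refine ⟨c, a, ?_, hbca⟩
    ext x
    simp only [Finset.mem_erase, Finset.mem_insert, Finset.mem_singleton]
    constructor
    · rintro ⟨hx, rfl | rfl | rfl⟩ <;> tauto
    · rintro (rfl | rfl) <;> [exact ⟨hbc.symm, Or.inr (Or.inr rfl)⟩;
        exact ⟨hab, Or.inl rfl⟩]
  · refine ⟨a, b, ?_, hcab⟩
    ext x
    simp only [Finset.mem_erase, Finset.mem_insert, Finset.mem_singleton]
    constructor
    · rintro ⟨hx, rfl | rfl | rfl⟩ <;> tauto
    · rintro (rfl | rfl) <;> [exact ⟨hac, Or.inl rfl⟩;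
        exact ⟨hbc, Or.inr (Or.inl rfl)⟩]

variable {S : Type*} [Fintype S] [MulAction G S]

lemma fixCard_le_FixG {g : G} (hg : g ≠ 1) : fixCard G S g ≤ FixG G S := by
  classical
  apply le_csSup
  · refine ⟨Fintype.card S, ?_⟩
    rintro k ⟨g', -, rfl⟩
    exact (Finset.card_filter_le _ _).trans (le_of_eq Finset.card_univ)
  · exact ⟨g, hg, rfl⟩

lemma card_not_fixed [DecidableEq S] {g : G} (hg : g ≠ 1) :
    Fintype.card S ≤ FixG G S +
      (Finset.univ.filter fun s : S => ¬ g • s = s).card := by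
  classical
  have h : (Finset.univ.filter fun s : S => g • s = s).card
      + (Finset.univ.filter fun s : S => ¬ g • s = s).card = Fintype.card S := by
    rw [← Finset.card_univ]
    exact Finset.card_filter_add_card_filter_not _
  have h2 : (Finset.univ.filter fun s : S => g • s = s).card ≤ FixG G S := by
    have h3 := fixCard_le_FixG (S := S) hg
    unfold fixCard at h3
    convert h3 using 3
  omega

end PermFix

section MainIneq

variable [Fintype V] {G : Type*} [Group G] {S : Type*} [Fintype S] [DecidableEq S]
  [Nonempty S] [MulAction G S]

lemma Ycomplex_vert_iff {X : SComplex V} {φ : V → V → G} {p : V × S} :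
    p ∈ (Ycomplex X φ S).verts ↔ ({p.1} : Finset V) ∈ X.faces := by
  unfold SComplex.verts
  rw [Finset.mem_filter]
  simp only [Finset.mem_univ, true_and]
  rw [mem_Ycomplex_faces]
  constructor
  · rintro ⟨h, -, -⟩
    simpa using h
  · intro h
    refine ⟨by simpa using h, by simp, ?_⟩
    intro a ha b hb hab
    rw [Finset.mem_singleton] at ha hb
    subst ha; subst hb
    exact absurd rfl hab

lemma Ycomplex_fiber_eq {X : SComplex V} {φ : V → V → G} {u : V}
    (hu : ({u} : Finset V) ∈ X.faces) :
    ((Ycomplex X φ S).verts.filter fun p => p.1 = u)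
      = {u} ×ˢ (Finset.univ : Finset S) := by
  ext p
  rw [Finset.mem_filter, Finset.mem_product]
  simp only [Finset.mem_singleton, Finset.mem_univ, and_true, Ycomplex_vert_iff]
  constructor
  · exact fun h => h.2
  · intro h
    exact ⟨by rw [h]; exact hu, h⟩

lemma deficiency_ge (X : SComplex V) (n : ℕ) (hn : 3 ≤ n) (hpure : X.IsPureOfRank n)
    (φ : V → V → G) (hφ : IsCochain G φ) :
    (1 - (FixG G S : ℝ) / Fintype.card S) * normD1 X φ ≤
      deficiency (Ycomplex X φ S) X Prod.fst := by
  classical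
  by_cases hS : Fintype.card S ≤ FixG G S
  · -- then 1 - r/m ≤ 0 and normD1 ≥ 0, deficiency ≥ 0
    have h1 : (1 - (FixG G S : ℝ) / Fintype.card S) ≤ 0 := by
      have hm : (0:ℝ) < Fintype.card S := by
        exact_mod_cast Fintype.card_pos
      have : (1:ℝ) ≤ (FixG G S : ℝ) / Fintype.card S := by
        rw [le_div_iff₀ hm]
        simpa using (by exact_mod_cast hS : (Fintype.card S : ℝ) ≤ FixG G S)
      linarith
    have h2 : (1 - (FixG G S : ℝ) / Fintype.card S) * normD1 X φ ≤ 0 :=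
      mul_nonpos_of_nonpos_of_nonneg h1 (normD1_nonneg X φ)
    refine h2.trans ?_
    unfold deficiency
    refine Finset.sum_nonneg fun u _ => mul_nonneg
      (div_nonneg (X.weight_nonneg _) (by positivity)) ?_
    exact Finset.sum_nonneg fun ut _ =>
      Finset.sum_nonneg fun e _ => SComplex.weight_nonneg _ _
  push_neg at hS
  have hmpos : 0 < Fintype.card S := lt_of_le_of_lt (Nat.zero_le _) hS
  have hmR : (0:ℝ) < Fintype.card S := by exact_mod_cast hmpos
  set r : ℝ := (FixG G S : ℝ) with hr
  set m : ℝ := (Fintype.card S : ℝ) with hmdef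
  set B := (X.simps 2).filter
    (fun τ => ∃ u v w : V, τ = ({u, v, w} : Finset V) ∧ d1 φ u v w ≠ 1) with hB
  -- Step 2 : per (u,s) bound on locDef
  have step2 : ∀ u : V, ∀ s : S,
      ∑ τ ∈ (B.filter fun τ => u ∈ τ).filter
          (fun τ => τ.erase u ∈ Dset (Ycomplex X φ S) X Prod.fst (u, s)),
        (X.lk {u}).weight (τ.erase u) ≤ locDef (Ycomplex X φ S) X Prod.fst (u, s) := by
    intro u s
    have hloc : locDef (Ycomplex X φ S) X Prod.fst (u, s)
        = ∑ e ∈ Dset (Ycomplex X φ S) X Prod.fst (u, s), (X.lk {u}).weight e := rfl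
    rw [hloc]
    have hinj : ∀ τ₁ ∈ (B.filter fun τ => u ∈ τ).filter
        (fun τ => τ.erase u ∈ Dset (Ycomplex X φ S) X Prod.fst (u, s)), ∀ τ₂ ∈
        (B.filter fun τ => u ∈ τ).filter
        (fun τ => τ.erase u ∈ Dset (Ycomplex X φ S) X Prod.fst (u, s)),
        τ₁.erase u = τ₂.erase u → τ₁ = τ₂ := by
      intro τ₁ h₁ τ₂ h₂ he
      have m₁ : u ∈ τ₁ := (Finset.mem_filter.mp (Finset.mem_filter.mp h₁).1).2
      have m₂ : u ∈ τ₂ := (Finset.mem_filter.mp (Finset.mem_filter.mp h₂).1).2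
      rw [← Finset.insert_erase m₁, ← Finset.insert_erase m₂, he]
    rw [← Finset.sum_image hinj]
    refine Finset.sum_le_sum_of_subset_of_nonneg ?_ ?_
    · intro e he
      obtain ⟨τ, hτA, rfl⟩ := Finset.mem_image.mp he
      exact (Finset.mem_filter.mp hτA).2
    · intro e _ _
      exact SComplex.weight_nonneg _ _
  -- Step 3 : counting over s
  have step3 : ∀ u : V, ∀ τ ∈ B, u ∈ τ →
      m - r ≤ ((Finset.univ.filter fun s : S =>
        τ.erase u ∈ Dset (Ycomplex X φ S) X Prod.fst (u, s)).card : ℝ) := by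
    intro u τ hτB huτ
    rw [hB, Finset.mem_filter] at hτB
    obtain ⟨hτ2, a, b, c, hτe, hd⟩ := hτB
    have hτc : τ.card = 3 := (SComplex.mem_simps.mp hτ2).2
    obtain ⟨v, w, herase, hdvw⟩ := d1_ne_of_mem hφ hτc hτe hd huτ
    have hτuvw : τ = ({u, v, w} : Finset V) := by
      rw [← Finset.insert_erase huτ, herase]
    have hsim : ({u, v, w} : Finset V) ∈ X.simps 2 := hτuvw ▸ hτ2
    have hfilter : (Finset.univ.filter fun s : S =>
          τ.erase u ∈ Dset (Ycomplex X φ S) X Prod.fst (u, s))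
        = Finset.univ.filter fun s : S => ¬ (d1 φ u v w • s = s) := by
      apply Finset.filter_congr
      intro s _
      rw [herase]
      exact mem_Dset_iff hφ hsim s
    rw [hfilter]
    have hcount := card_not_fixed (S := S) hdvw
    have : (Fintype.card S : ℝ) ≤ (FixG G S : ℝ) +
        ((Finset.univ.filter fun s : S => ¬ d1 φ u v w • s = s).card : ℝ) := by
      exact_mod_cast hcount
    rw [hr, hmdef]
    linarith
  -- Step 4 : per-vertex bound
  have step4 : ∀ u : V,
      (m - r) * ∑ τ ∈ B.filter (fun τ => u ∈ τ), (X.lk {u}).weight (τ.erase u)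
        ≤ ∑ s : S, locDef (Ycomplex X φ S) X Prod.fst (u, s) := by
    intro u
    have h1 : ∀ s : S,
        ∑ τ ∈ B.filter (fun τ => u ∈ τ),
          (if τ.erase u ∈ Dset (Ycomplex X φ S) X Prod.fst (u, s) then
            (X.lk {u}).weight (τ.erase u) else 0)
        ≤ locDef (Ycomplex X φ S) X Prod.fst (u, s) := by
      intro s
      rw [← Finset.sum_filter]
      exact step2 u s
    calc (m - r) * ∑ τ ∈ B.filter (fun τ => u ∈ τ), (X.lk {u}).weight (τ.erase u)
        = ∑ τ ∈ B.filter (fun τ => u ∈ τ), (m - r) * (X.lk {u}).weight (τ.erase u) := by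
          rw [Finset.mul_sum]
      _ ≤ ∑ τ ∈ B.filter (fun τ => u ∈ τ),
            ((Finset.univ.filter fun s : S =>
              τ.erase u ∈ Dset (Ycomplex X φ S) X Prod.fst (u, s)).card : ℝ)
            * (X.lk {u}).weight (τ.erase u) := by
          refine Finset.sum_le_sum fun τ hτ => ?_
          have hτB : τ ∈ B := (Finset.mem_filter.mp hτ).1
          have huτ : u ∈ τ := (Finset.mem_filter.mp hτ).2
          exact mul_le_mul_of_nonneg_right (step3 u τ hτB huτ)
            (SComplex.weight_nonneg _ _)
      _ = ∑ τ ∈ B.filter (fun τ => u ∈ τ), ∑ s : S,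
            (if τ.erase u ∈ Dset (Ycomplex X φ S) X Prod.fst (u, s) then
              (X.lk {u}).weight (τ.erase u) else 0) := by
          refine Finset.sum_congr rfl fun τ _ => ?_
          rw [← Finset.sum_filter, Finset.sum_const, nsmul_eq_mul]
      _ = ∑ s : S, ∑ τ ∈ B.filter (fun τ => u ∈ τ),
            (if τ.erase u ∈ Dset (Ycomplex X φ S) X Prod.fst (u, s) then
              (X.lk {u}).weight (τ.erase u) else 0) := Finset.sum_comm
      _ ≤ ∑ s : S, locDef (Ycomplex X φ S) X Prod.fst (u, s) :=
          Finset.sum_le_sum fun s _ => h1 s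
  -- assemble
  have hfibercard : ∀ u : V, ({u} : Finset V) ∈ X.faces →
      (((Ycomplex X φ S).verts.filter fun p => p.1 = u).card : ℝ) = m := by
    intro u hu
    rw [Ycomplex_fiber_eq hu, Finset.card_product, Finset.card_singleton,
      Finset.card_univ, one_mul, hmdef]
  have hfibersum : ∀ u : V, ({u} : Finset V) ∈ X.faces →
      ∑ ut ∈ ((Ycomplex X φ S).verts.filter fun p => p.1 = u),
        locDef (Ycomplex X φ S) X Prod.fst ut
      = ∑ s : S, locDef (Ycomplex X φ S) X Prod.fst (u, s) := by
    intro u hu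
    rw [Ycomplex_fiber_eq hu, Finset.sum_product, Finset.sum_singleton]
  have hvertmem : ∀ u : V, u ∈ X.verts ↔ ({u} : Finset V) ∈ X.faces := by
    intro u
    unfold SComplex.verts
    rw [Finset.mem_filter]
    simp
  have main : ∑ u ∈ X.verts, (X.weight {u} / m) *
      ((m - r) * ∑ τ ∈ B.filter (fun τ => u ∈ τ), (X.lk {u}).weight (τ.erase u))
      ≤ deficiency (Ycomplex X φ S) X Prod.fst := by
    unfold deficiency
    refine Finset.sum_le_sum fun u hu => ?_
    have huf : ({u} : Finset V) ∈ X.faces := (hvertmem u).mp hu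
    rw [hfibercard u huf, hfibersum u huf]
    exact mul_le_mul_of_nonneg_left (step4 u)
      (div_nonneg (X.weight_nonneg _) (le_of_lt hmR))
  -- LHS equals the sum
  have hwid : ∀ u ∈ X.verts, ∀ τ ∈ B.filter (fun τ => u ∈ τ),
      X.weight {u} * (X.lk {u}).weight (τ.erase u) = X.weight τ / 3 := by
    intro u _ τ hτ
    have hτB : τ ∈ B := (Finset.mem_filter.mp hτ).1
    have huτ : u ∈ τ := (Finset.mem_filter.mp hτ).2
    exact weight_lk_identity hn hpure ((Finset.mem_filter.mp hτB).1) huτ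
  have hrw : ∀ u ∈ X.verts, (X.weight {u} / m) *
      ((m - r) * ∑ τ ∈ B.filter (fun τ => u ∈ τ), (X.lk {u}).weight (τ.erase u))
      = ((m - r) / m) * ∑ τ ∈ B.filter (fun τ => u ∈ τ), X.weight τ / 3 := by
    intro u hu
    have e1 : X.weight {u} / m * ((m - r) *
        ∑ τ ∈ B.filter (fun τ => u ∈ τ), (X.lk {u}).weight (τ.erase u))
        = ∑ τ ∈ B.filter (fun τ => u ∈ τ),
            ((m - r) / m) * (X.weight {u} * (X.lk {u}).weight (τ.erase u)) := by
      rw [Finset.mul_sum, Finset.mul_sum]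
      exact Finset.sum_congr rfl fun τ _ => by ring
    rw [e1, Finset.mul_sum]
    exact Finset.sum_congr rfl fun τ hτ => by rw [hwid u hu τ hτ]
  have hdouble : ∑ u ∈ X.verts, ∑ τ ∈ B.filter (fun τ => u ∈ τ), X.weight τ / 3
      = ∑ τ ∈ B, X.weight τ := by
    have h1 : ∀ u ∈ X.verts, ∑ τ ∈ B.filter (fun τ => u ∈ τ), X.weight τ / 3
        = ∑ τ ∈ B, (if u ∈ τ then X.weight τ / 3 else 0) := fun u _ =>
      Finset.sum_filter _ _
    rw [Finset.sum_congr rfl h1, Finset.sum_comm]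
    refine Finset.sum_congr rfl fun τ hτ => ?_
    have hτ2 : τ ∈ X.simps 2 := (Finset.mem_filter.mp (hB ▸ hτ)).1
    have hτf : τ ∈ X.faces := (SComplex.mem_simps.mp hτ2).1
    have hτc : τ.card = 3 := (SComplex.mem_simps.mp hτ2).2
    have hsubv : ∀ x ∈ τ, x ∈ X.verts := by
      intro x hx
      rw [hvertmem x]
      exact X.down_closed τ hτf {x} (Finset.singleton_subset_iff.mpr hx)
        (Finset.singleton_nonempty x)
    rw [← Finset.sum_filter]
    have : X.verts.filter (fun u => u ∈ τ) = τ := by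
      ext x
      rw [Finset.mem_filter]
      exact ⟨fun h => h.2, fun h => ⟨hsubv x h, h⟩⟩
    rw [this, Finset.sum_const, hτc, nsmul_eq_mul]
    push_cast
    ring
  have hnormD1 : normD1 X φ = ∑ τ ∈ B, X.weight τ := by
    unfold normD1
    rw [hB]
    congr
  have heq : (1 - r / m) * normD1 X φ
      = ∑ u ∈ X.verts, (X.weight {u} / m) *
          ((m - r) * ∑ τ ∈ B.filter (fun τ => u ∈ τ),
            (X.lk {u}).weight (τ.erase u)) := by
    have e0 : (1 - r / m) * normD1 X φ = ((m - r) / m) * ∑ τ ∈ B, X.weight τ := by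
      rw [hnormD1]
      have h' : 1 - r / m = (m - r) / m := by field_simp
      rw [h']
    rw [e0, ← hdouble, Finset.mul_sum]
    exact Finset.sum_congr rfl fun u hu => (hrw u hu).symm
  rw [heq]
  exact main

end MainIneq

end AuxProof

/-- Theorem 2.3. If `G` acts on a finite nonempty set `S` with
`Fix_G(S) < |S|`, `C¹∖Z¹` is nonempty and `h₁(X;G) > 0`, then every `φ ∈ C¹(X;G)` has a
cocycle `ψ` with `dist(φ,ψ) ≤ m(Y_φ) / ((1 - Fix_G(S)/|S|)·h₁(X;G))`. -/
theorem near_cocycle_of_near_cover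
    {V : Type*} [Fintype V] [DecidableEq V]
    {G : Type*} [Group G] {S : Type*} [Fintype S] [DecidableEq S] [Nonempty S]
    [MulAction G S]
    (X : SComplex V) (n : ℕ) (hn : 3 ≤ n) (hpure : X.IsPureOfRank n)
    (hfaithful : FixG G S < Fintype.card S)
    (hne : ∃ φ₀ : V → V → G, IsCochain G φ₀ ∧ ¬ IsCocycle X φ₀)
    (hh1 : 0 < h1 X G)
    (φ : V → V → G) (hφ : IsCochain G φ) :
    ∃ ψ : V → V → G, IsCocycle X ψ ∧
      dist1 X φ ψ ≤ deficiency (Ycomplex X φ S) X Prod.fst /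
        ((1 - (FixG G S : ℝ) / Fintype.card S) * h1 X G) := by
  classical
  have hmR : (0:ℝ) < Fintype.card S := by exact_mod_cast Fintype.card_pos
  have hcpos : 0 < 1 - (FixG G S : ℝ) / Fintype.card S := by
    have h : (FixG G S : ℝ) / Fintype.card S < 1 := by
      rw [div_lt_one hmR]
      exact_mod_cast hfaithful
    linarith
  have hKpos : 0 < (1 - (FixG G S : ℝ) / Fintype.card S) * h1 X G := mul_pos hcpos hh1
  have hdef : (1 - (FixG G S : ℝ) / Fintype.card S) * normD1 X φ ≤
      deficiency (Ycomplex X φ S) X Prod.fst := deficiency_ge X n hn hpure φ hφ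
  have hdef0 : 0 ≤ deficiency (Ycomplex X φ S) X Prod.fst :=
    le_trans (mul_nonneg (le_of_lt hcpos) (normD1_nonneg X φ)) hdef
  by_cases hc : IsCocycle X φ
  · refine ⟨φ, hc, ?_⟩
    rw [dist1_self]
    exact div_nonneg hdef0 hKpos.le
  · have hDne : Set.Nonempty {d : ℝ | ∃ ψ : V → V → G, IsCocycle X ψ ∧ d = dist1 X φ ψ} :=
      ⟨dist1 X φ (fun _ _ => 1), fun _ _ => (1:G), isCocycle_one X, rfl⟩
    have hDfin : Set.Finite {d : ℝ | ∃ ψ : V → V → G, IsCocycle X ψ ∧ d = dist1 X φ ψ} := by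
      apply Set.Finite.subset (Finset.finite_toSet ((X.simps 1).powerset.image
        (fun T => ∑ e ∈ T, X.weight e)))
      rintro d ⟨ψ, -, rfl⟩
      rw [Finset.coe_image, Set.mem_image]
      refine ⟨(X.simps 1).filter
        (fun e => ∃ u v : V, e = {u, v} ∧ φ u v * (ψ u v)⁻¹ ≠ 1), ?_, by
          unfold dist1 norm1
          congr⟩
      rw [Finset.mem_coe, Finset.mem_powerset]
      exact Finset.filter_subset _ _
    have hmem : csyNorm X φ ∈
        {d : ℝ | ∃ ψ : V → V → G, IsCocycle X ψ ∧ d = dist1 X φ ψ} :=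
      hDne.csInf_mem hDfin
    obtain ⟨ψ, hψ, hcsy⟩ := hmem
    refine ⟨ψ, hψ, ?_⟩
    have hcsy0 : 0 ≤ csyNorm X φ := hcsy ▸ dist1_nonneg X φ ψ
    have hbdd : BddBelow {r : ℝ | ∃ χ : V → V → G, IsCochain G χ ∧ ¬ IsCocycle X χ ∧
        r = normD1 X χ / csyNorm X χ} := by
      refine ⟨0, ?_⟩
      rintro x ⟨χ, -, -, rfl⟩
      refine div_nonneg (normD1_nonneg X χ) ?_
      refine le_csInf ⟨dist1 X χ (fun _ _ => 1), fun _ _ => (1:G), isCocycle_one X, rfl⟩ ?_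
      rintro b ⟨ρ, -, rfl⟩
      exact dist1_nonneg X χ ρ
    have hle : h1 X G ≤ normD1 X φ / csyNorm X φ := csInf_le hbdd ⟨φ, hφ, hc, rfl⟩
    have hge : h1 X G * csyNorm X φ ≤ normD1 X φ := by
      rcases eq_or_lt_of_le hcsy0 with heq | hpos
      · rw [← heq, mul_zero]
        exact normD1_nonneg X φ
      · exact (le_div_iff₀ hpos).mp hle
    rw [← hcsy, le_div_iff₀ hKpos]
    calc csyNorm X φ * ((1 - (FixG G S : ℝ) / Fintype.card S) * h1 X G)
        = (1 - (FixG G S : ℝ) / Fintype.card S) * (h1 X G * csyNorm X φ) := by ring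
      _ ≤ (1 - (FixG G S : ℝ) / Fintype.card S) * normD1 X φ :=
          mul_le_mul_of_nonneg_left hge hcpos.le
      _ ≤ deficiency (Ycomplex X φ S) X Prod.fst := hdef
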